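/- Let X be a third-order tensor with entries X(i₁,i₂,i₃) = Tr(G₁(i₁)·G₂(i₂)·G₃(i₃)) where Gₖ(iₖ) ∈ ℝ^{r_{k-1}×r_k} (indices mod 3, r₀ = r₃). Then the matrix X₍₁₎ of size I₁ × (I₂I₃) obtained by unfolding X along the first mode has rank at most r₃·r₁. -/

import Mathlib

/-- TR bound for a third-order tensor: if
`X(i₁,i₂,i₃) = Tr(G₁(i₁)·G₂(i₂)·G₃(i₃))` with `G₁(i₁) ∈ ℝ^{r₃×r₁}`,
`G₂(i₂) ∈ ℝ^{r₁×r₂}`, `G₃(i₃) ∈ ℝ^{r₂×r₃}`, then the mode-1 unfolding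
`X₍₁₎ ∈ ℝ^{I₁ × (I₂I₃)}` has rank at most `r₃·r₁`. -/
theorem rank_mode1_unfolding_le_TR_rank (I₁ I₂ I₃ r₁ r₂ r₃ : ℕ)
    (G₁ : Fin I₁ → Matrix (Fin r₃) (Fin r₁) ℝ)
    (G₂ : Fin I₂ → Matrix (Fin r₁) (Fin r₂) ℝ)
    (G₃ : Fin I₃ → Matrix (Fin r₂) (Fin r₃) ℝ)
    (X₁ : Matrix (Fin I₁) (Fin I₂ × Fin I₃) ℝ)
    (hX : ∀ i₁ i₂ i₃, X₁ i₁ (i₂, i₃) = Matrix.trace (G₁ i₁ * G₂ i₂ * G₃ i₃)) :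
    X₁.rank ≤ r₃ * r₁ := by
  set A : Matrix (Fin I₁) (Fin r₃ × Fin r₁) ℝ := fun i₁ p => G₁ i₁ p.1 p.2
  set B : Matrix (Fin r₃ × Fin r₁) (Fin I₂ × Fin I₃) ℝ :=
    fun p q => (G₂ q.1 * G₃ q.2) p.2 p.1
  have hfac : X₁ = A * B := by
    ext i₁ ⟨i₂, i₃⟩
    rw [hX, Matrix.mul_apply]
    simp only [Matrix.mul_apply, Matrix.trace, Matrix.diag, A, B, Fintype.sum_prod_type]
    simp only [Matrix.mul_apply, Finset.sum_mul, mul_assoc]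
    exact Finset.sum_congr rfl fun x _ => by rw [Finset.sum_comm]; simp [Finset.mul_sum]
  calc X₁.rank ≤ A.rank := hfac ▸ Matrix.rank_mul_le_left A B
    _ ≤ Fintype.card (Fin r₃ × Fin r₁) := Matrix.rank_le_card_width A
    _ = r₃ * r₁ := by simp
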